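/- Suppose e₁,…,e_n : J → ℝ^ν is a C¹ moving frame with span T(t), and v(t) = Σᵢ eᵢ(t)·μᵢ(t) with μᵢ : J → ℝ differentiable. Then v'(t) ⊥ T(t) for all t if and only if μᵢ'(t) + Σ_k B_{ik}(t)·μ_k(t) = 0 for all i and t, where B_{ik}(t) = Σ_j ĝ_{ij}(t)·⟨e_j(t), e_k'(t)⟩ and ĝ(t) is the inverse of the Gram matrix g_{ij}(t) = ⟨eᵢ(t), e_j(t)⟩. -/

import Mathlib

open scoped RealInnerProductSpace

/-- In a C¹ moving frame, a tangent field `v(t) = Σᵢ μᵢ(t)·eᵢ(t)` has velocity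
orthogonal to `T(t) = span{eᵢ(t)}` iff `μᵢ' + Σ_k B_{ik}·μ_k = 0`, the
coordinate form of the parallel-transport equation. -/
theorem parallel_transport_equations_in_moving_frame {ν n : ℕ} (J : Set ℝ)
    (hJopen : IsOpen J) (hJconn : J.OrdConnected)
    (e : Fin n → ℝ → EuclideanSpace ℝ (Fin ν))
    (he : ∀ i, ContDiff ℝ 1 (e i))
    (hind : ∀ t ∈ J, LinearIndependent ℝ (fun i => e i t))
    (μ : Fin n → ℝ → ℝ) (hμ : ∀ i, Differentiable ℝ (μ i))
    (g ginv : ℝ → Matrix (Fin n) (Fin n) ℝ)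
    (hg : ∀ t, ∀ i j, g t i j = ⟪e i t, e j t⟫)
    (hginv : ∀ t ∈ J, g t * ginv t = 1 ∧ ginv t * g t = 1)
    (B : ℝ → Matrix (Fin n) (Fin n) ℝ)
    (hB : ∀ t, ∀ i k, B t i k = ∑ j, ginv t i j * ⟪e j t, deriv (e k) t⟫) :
    (∀ t ∈ J, ∀ w ∈ Submodule.span ℝ (Set.range fun i => e i t),
        ⟪deriv (fun u => ∑ i, μ i u • e i u) t, w⟫ = 0) ↔
      (∀ t ∈ J, ∀ i, deriv (μ i) t + ∑ k, B t i k * μ k t = 0) := by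
  have hde : ∀ i t, HasDerivAt (e i) (deriv (e i) t) t := fun i t =>
    (((he i).differentiable one_ne_zero) t).hasDerivAt
  have hv : ∀ t, HasDerivAt (fun u => ∑ i, μ i u • e i u)
      (∑ i, (μ i t • deriv (e i) t + deriv (μ i) t • e i t)) t := fun t =>
    HasDerivAt.fun_sum fun i _ => ((hμ i t).hasDerivAt.smul (hde i t))
  set A : ℝ → Matrix (Fin n) (Fin n) ℝ :=
    fun t => Matrix.of fun j k => ⟪e j t, deriv (e k) t⟫ with hA
  have hcval : ∀ t j, ⟪e j t, deriv (fun u => ∑ i, μ i u • e i u) t⟫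
      = (g t).mulVec (fun m => deriv (μ m) t) j + (A t).mulVec (fun k => μ k t) j := by
    intro t j
    rw [(hv t).deriv]
    simp only [inner_sum, inner_add_right, real_inner_smul_right, Matrix.mulVec,
      dotProduct, hA, Matrix.of_apply]
    rw [Finset.sum_add_distrib, add_comm]
    congr 1
    · exact Finset.sum_congr rfl fun m _ => by rw [hg]; ring
    · exact Finset.sum_congr rfl fun k _ => by ring
  have hBmat : ∀ t, B t = ginv t * A t := by
    intro t; ext i k; rw [hB, Matrix.mul_apply]; rfl
  constructor
  · intro h t ht i
    have hvec : (g t).mulVec (fun m => deriv (μ m) t)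
        + (A t).mulVec (fun k => μ k t) = 0 := by
      funext j
      have h0 := h t ht (e j t) (Submodule.subset_span ⟨j, rfl⟩)
      rw [real_inner_comm] at h0
      simp only [Pi.add_apply, Pi.zero_apply]
      rw [← hcval t j]
      exact h0
    have key : (fun m => deriv (μ m) t) + (B t).mulVec (fun k => μ k t) = 0 := by
      have h2 := congrArg (fun w => (ginv t).mulVec w) hvec
      simpa [Matrix.mulVec_add, Matrix.mulVec_mulVec, (hginv t ht).2, hBmat,
        Matrix.one_mulVec] using h2
    have h3 := congrFun key i
    simpa [Matrix.mulVec, dotProduct] using h3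
  · intro h t ht w hw
    have key : ∀ j, ⟪e j t, deriv (fun u => ∑ i, μ i u • e i u) t⟫ = 0 := by
      intro j
      have hvec : (fun m => deriv (μ m) t) + (B t).mulVec (fun k => μ k t) = 0 := by
        funext i
        have h1 := h t ht i
        simpa [Matrix.mulVec, dotProduct] using h1
      have h2 := congrArg (fun w => (g t).mulVec w) hvec
      simp only [Matrix.mulVec_add, Matrix.mulVec_mulVec, hBmat, Matrix.mulVec_zero] at h2
      rw [← Matrix.mul_assoc, (hginv t ht).1, Matrix.one_mul] at h2
      rw [hcval t j]
      have h3 := congrFun h2 j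
      simpa using h3
    induction hw using Submodule.span_induction with
    | mem x hx =>
        obtain ⟨j, rfl⟩ := hx
        rw [real_inner_comm]; exact key j
    | zero => simp
    | add x y _ _ hx hy => rw [inner_add_right, hx, hy]; ring
    | smul a x _ hx => rw [real_inner_smul_right, hx]; ring
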